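/- Under the BPR assumption, the social cost at equilibrium is unique: for any α ∈ [0,1], if (x^H, x^A) and (y^H, y^A) are both equilibria with autonomous fraction α, then S(Δ(x^H + x^A)) = S(Δ(y^H + y^A)). -/

import Mathlib

open scoped BigOperators

/-- Aggregated link flow `f = Δ x`. -/
noncomputable def aggFlow {L P : Type*} [Fintype P] (Δ : L → P → ℝ) (x : P → ℝ) : L → ℝ :=
  fun a => ∑ p, Δ a p * x p

/-- Human path cost `C_p^H(f) = Σ_a Δ_{ap} t_a(f_a)`. -/
noncomputable def CH {L P : Type*} [Fintype L] (Δ : L → P → ℝ) (t : L → ℝ → ℝ)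
    (f : L → ℝ) (p : P) : ℝ :=
  ∑ a, Δ a p * t a (f a)

/-- Autonomous (marginal social) path cost
`C_p^A(f) = Σ_a Δ_{ap} (t_a(f_a) + f_a t_a'(f_a))`. -/
noncomputable def CA {L P : Type*} [Fintype L] (Δ : L → P → ℝ) (t : L → ℝ → ℝ)
    (f : L → ℝ) (p : P) : ℝ :=
  ∑ a, Δ a p * (t a (f a) + f a * deriv (t a) (f a))

/-- Social cost `S(f) = Σ_a f_a t_a(f_a)`. -/
noncomputable def Scost {L : Type*} [Fintype L] (t : L → ℝ → ℝ) (f : L → ℝ) : ℝ :=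
  ∑ a, f a * t a (f a)

/-- Equilibrium with autonomous fraction `α`: a feasible path flow pattern
together with multipliers `λ^H, λ^A` satisfying the Wardrop-like conditions. -/
noncomputable def IsEquilibrium {L P : Type*} [Fintype L] [Fintype P]
    (Δ : L → P → ℝ) (t : L → ℝ → ℝ) (α : ℝ) (xH xA : P → ℝ) : Prop :=
  (∀ p, 0 ≤ xH p) ∧ (∀ p, 0 ≤ xA p) ∧ (∑ p, xH p = 1 - α) ∧ (∑ p, xA p = α) ∧
  ∃ lamH lamA : ℝ, ∀ p : P,
    (lamH ≤ CH Δ t (aggFlow Δ (fun r => xH r + xA r)) p ∧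
      (0 < xH p → CH Δ t (aggFlow Δ (fun r => xH r + xA r)) p = lamH)) ∧
    (lamA ≤ CA Δ t (aggFlow Δ (fun r => xH r + xA r)) p ∧
      (0 < xA p → CA Δ t (aggFlow Δ (fun r => xH r + xA r)) p = lamA))

/-- Baseline equilibrium (`α = 0`): a single nonnegative unit-demand path flow
vector satisfying the human Wardrop condition. -/
noncomputable def IsBaselineEquilibrium {L P : Type*} [Fintype L] [Fintype P]
    (Δ : L → P → ℝ) (t : L → ℝ → ℝ) (xt : P → ℝ) : Prop :=
  (∀ p, 0 ≤ xt p) ∧ (∑ p, xt p = 1) ∧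
  ∃ lam : ℝ, ∀ p : P,
    lam ≤ CH Δ t (aggFlow Δ xt) p ∧ (0 < xt p → CH Δ t (aggFlow Δ xt) p = lam)

/-- BPR assumption: `t_a(z) = k_a z^n + b_a` for `z ≥ 0`, with `k_a > 0`,
`b_a ≥ 0`, and exponent `n ≥ 1`. -/
def IsBPR {L : Type*} (t : L → ℝ → ℝ) (n : ℝ) (k b : L → ℝ) : Prop :=
  1 ≤ n ∧ (∀ a, 0 < k a) ∧ (∀ a, 0 ≤ b a) ∧
  ∀ a, ∀ z : ℝ, 0 ≤ z → t a z = k a * z ^ n + b a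



section AuxLemmas

/-- Strict first-order convexity inequality for `z ↦ z^(n+1)` on `[0, ∞)`. -/
lemma core_lt {n z w : ℝ} (hn : 1 ≤ n) (hz : 0 ≤ z) (hw : 0 ≤ w) (hne : w ≠ z) :
    (n + 1) * z ^ n * (w - z) < w ^ (n + 1) - z ^ (n + 1) := by
  have hn0 : n ≠ 0 := by linarith
  rcases eq_or_lt_of_le hz with rfl | hzpos
  · have hw0 : 0 < w := lt_of_le_of_ne hw (Ne.symm hne)
    rw [Real.zero_rpow hn0, Real.zero_rpow (show n + 1 ≠ 0 by linarith)]
    simpa using Real.rpow_pos_of_pos hw0 (n + 1)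
  · set s : ℝ := w / z - 1 with hsdef
    have hdiv : 0 ≤ w / z := div_nonneg hw hzpos.le
    have hs1 : -1 ≤ s := by simp only [hsdef]; linarith
    have hsne : s ≠ 0 := by
      intro h
      apply hne
      have hwz : w / z = 1 := by simp only [hsdef] at h; linarith
      exact (div_eq_one_iff_eq hzpos.ne').mp hwz
    have hb := one_add_mul_self_lt_rpow_one_add hs1 hsne (show (1:ℝ) < n + 1 by linarith)
    have hzp : 0 < z ^ (n + 1) := Real.rpow_pos_of_pos hzpos _
    have hmul := mul_lt_mul_of_pos_left hb hzp
    have h1s : (0:ℝ) ≤ 1 + s := by linarith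
    have hr : z ^ (n + 1) * (1 + s) ^ (n + 1) = w ^ (n + 1) := by
      rw [← Real.mul_rpow hzpos.le h1s]
      congr 1
      simp only [hsdef]
      field_simp
      ring
    have hzz : z ^ (n + 1) = z ^ n * z := Real.rpow_add_one hzpos.ne' n
    have hl : z ^ (n + 1) * (1 + (n + 1) * s) = z ^ (n + 1) + (n + 1) * z ^ n * (w - z) := by
      rw [hzz]
      simp only [hsdef]
      field_simp
    rw [hl, hr] at hmul
    linarith

/-- Non-strict version of `core_lt`. -/
lemma core_le {n z w : ℝ} (hn : 1 ≤ n) (hz : 0 ≤ z) (hw : 0 ≤ w) :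
    (n + 1) * z ^ n * (w - z) ≤ w ^ (n + 1) - z ^ (n + 1) := by
  rcases eq_or_ne w z with rfl | hne
  · simp
  · exact (core_lt hn hz hw hne).le

/-- Derivative formula for a BPR latency function: `t(z) + z t'(z) = (n+1) k z^n + b`. -/
lemma marg_formula {t : ℝ → ℝ} {n k b : ℝ} (hn : 1 ≤ n)
    (hform : ∀ z : ℝ, 0 ≤ z → t z = k * z ^ n + b) {z : ℝ} (hz : 0 ≤ z) :
    t z + z * deriv t z = (n + 1) * (k * z ^ n) + b := by
  rcases eq_or_lt_of_le hz with rfl | hzpos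
  · simp [hform 0 le_rfl, Real.zero_rpow (show n ≠ 0 by linarith)]
  · have hEq : t =ᶠ[nhds z] fun w => k * w ^ n + b :=
      Filter.eventuallyEq_of_mem (Ioi_mem_nhds hzpos)
        (fun w hw => hform w (le_of_lt hw))
    have hD : HasDerivAt (fun w : ℝ => k * w ^ n + b) (k * (n * z ^ (n - 1))) z :=
      ((Real.hasDerivAt_rpow_const (Or.inl hzpos.ne')).const_mul k).add_const b
    have hzz : z ^ n = z ^ (n - 1) * z := by
      rw [← Real.rpow_add_one hzpos.ne' (n - 1)]
      ring_nf
    rw [hEq.deriv_eq, hD.deriv, hform z hz, hzz]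
    ring

/-- Exchange of summation. -/
lemma swap_sum {L P : Type*} [Fintype L] [Fintype P] (Δ : L → P → ℝ) (u : L → ℝ) (v : P → ℝ) :
    ∑ p, (∑ a, Δ a p * u a) * v p = ∑ a, u a * (∑ p, Δ a p * v p) := by
  simp_rw [Finset.sum_mul, Finset.mul_sum]
  rw [Finset.sum_comm]
  exact Finset.sum_congr rfl fun a _ => Finset.sum_congr rfl fun p _ => by ring

/-- Wardrop condition implies the flow is cost-minimal among flows of equal demand. -/
lemma wardrop {P : Type*} [Fintype P] (c : P → ℝ) (lam : ℝ) (x y : P → ℝ)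
    (hx0 : ∀ p, 0 ≤ x p) (hy0 : ∀ p, 0 ≤ y p) (hs : ∑ p, x p = ∑ p, y p)
    (hge : ∀ p, lam ≤ c p) (heq : ∀ p, 0 < x p → c p = lam) :
    0 ≤ ∑ p, c p * (y p - x p) := by
  have h1 : ∑ p, c p * x p = lam * ∑ p, x p := by
    rw [Finset.mul_sum]
    apply Finset.sum_congr rfl
    intro p _
    rcases eq_or_lt_of_le (hx0 p) with h | h
    · rw [← h]; ring
    · rw [heq p h]
  have h2 : lam * ∑ p, y p ≤ ∑ p, c p * y p := by
    rw [Finset.mul_sum]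
    exact Finset.sum_le_sum fun p _ => mul_le_mul_of_nonneg_right (hge p) (hy0 p)
  have h3 : ∑ p, c p * (y p - x p) = ∑ p, c p * y p - ∑ p, c p * x p := by
    rw [← Finset.sum_sub_distrib]
    exact Finset.sum_congr rfl fun p _ => by ring
  rw [h3, h1, hs]
  linarith

lemma sum_mul_sub_neg {P : Type*} [Fintype P] (w u v : P → ℝ) :
    ∑ p, w p * (u p - v p) = -∑ p, w p * (v p - u p) := by
  rw [← Finset.sum_neg_distrib]
  exact Finset.sum_congr rfl fun p _ => by ring

end AuxLemmas

/-- Key identity: the gradient of the (rescaled) Beckmann-type potential in a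
direction, written link-wise, equals `(n+1)·⟨C^H, uH⟩ + ⟨C^A, uA⟩`. -/
lemma key_identity {L P : Type*} [Fintype L] [Fintype P]
    (Δ : L → P → ℝ) (t : L → ℝ → ℝ) (n : ℝ) (k b : L → ℝ)
    (hn : 1 ≤ n)
    (hform : ∀ a, ∀ z : ℝ, 0 ≤ z → t a z = k a * z ^ n + b a)
    (f : L → ℝ) (hf0 : ∀ a, 0 ≤ f a) (uH uA : P → ℝ) :
    ∑ a, ((n + 1) * (k a * f a ^ n + b a) * ((∑ p, Δ a p * uH p) + ∑ p, Δ a p * uA p)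
        - n * b a * ∑ p, Δ a p * uA p)
      = (n + 1) * (∑ p, CH Δ t f p * uH p) + ∑ p, CA Δ t f p * uA p := by
  have eCH : ∀ p, CH Δ t f p = ∑ a, Δ a p * (k a * f a ^ n + b a) := fun p =>
    Finset.sum_congr rfl fun a _ => by rw [hform a _ (hf0 a)]
  have eCA : ∀ p, CA Δ t f p = ∑ a, Δ a p * ((n + 1) * (k a * f a ^ n) + b a) := fun p =>
    Finset.sum_congr rfl fun a _ => by
      rw [marg_formula hn (hform a) (hf0 a)]
  simp_rw [eCH, eCA]
  rw [swap_sum Δ (fun a => k a * f a ^ n + b a) uH,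
    swap_sum Δ (fun a => (n + 1) * (k a * f a ^ n) + b a) uA,
    Finset.mul_sum, ← Finset.sum_add_distrib]
  exact Finset.sum_congr rfl fun a _ => by ring

/-- Uniqueness of the equilibrium social cost: under the BPR assumption,
any two equilibria with the same autonomous fraction `α ∈ [0,1]` have the same
social cost. -/
theorem social_cost_unique {L P : Type*} [Fintype L] [Fintype P] [Nonempty P]
    (Δ : L → P → ℝ) (hΔ : ∀ a p, Δ a p = 0 ∨ Δ a p = 1)
    (t : L → ℝ → ℝ) (n : ℝ) (k b : L → ℝ) (hBPR : IsBPR t n k b)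
    (α : ℝ) (hα : α ∈ Set.Icc (0:ℝ) 1)
    (xH xA yH yA : P → ℝ)
    (hx : IsEquilibrium Δ t α xH xA) (hy : IsEquilibrium Δ t α yH yA) :
    Scost t (aggFlow Δ (fun r => xH r + xA r)) =
      Scost t (aggFlow Δ (fun r => yH r + yA r)) := by
  obtain ⟨hn, hk, hb, hform⟩ := hBPR
  obtain ⟨hxH0, hxA0, hxHs, hxAs, lamH, lamA, hxw⟩ := hx
  obtain ⟨hyH0, hyA0, hyHs, hyAs, muH, muA, hyw⟩ := hy
  set f := aggFlow Δ (fun r => xH r + xA r) with hfdef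
  set g := aggFlow Δ (fun r => yH r + yA r) with hgdef
  suffices hfg : f = g by rw [hfg]
  have hf0 : ∀ a, 0 ≤ f a := fun a => Finset.sum_nonneg fun p _ => by
    rcases hΔ a p with h | h <;>
      simp [h, add_nonneg (hxH0 p) (hxA0 p)]
  have hg0 : ∀ a, 0 ≤ g a := fun a => Finset.sum_nonneg fun p _ => by
    rcases hΔ a p with h | h <;>
      simp [h, add_nonneg (hyH0 p) (hyA0 p)]
  -- equilibrium (Wardrop) inequalities
  have hSh : 0 ≤ ∑ p, CH Δ t f p * (yH p - xH p) :=
    wardrop _ lamH xH yH hxH0 hyH0 (by rw [hxHs, hyHs])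
      (fun p => (hxw p).1.1) (fun p hp => (hxw p).1.2 hp)
  have hSa : 0 ≤ ∑ p, CA Δ t f p * (yA p - xA p) :=
    wardrop _ lamA xA yA hxA0 hyA0 (by rw [hxAs, hyAs])
      (fun p => (hxw p).2.1) (fun p hp => (hxw p).2.2 hp)
  have hSh' : 0 ≤ ∑ p, CH Δ t g p * (xH p - yH p) :=
    wardrop _ muH yH xH hyH0 hxH0 (by rw [hxHs, hyHs])
      (fun p => (hyw p).1.1) (fun p hp => (hyw p).1.2 hp)
  have hSa' : 0 ≤ ∑ p, CA Δ t g p * (xA p - yA p) :=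
    wardrop _ muA yA xA hyA0 hxA0 (by rw [hxAs, hyAs])
      (fun p => (hyw p).2.1) (fun p hp => (hyw p).2.2 hp)
  have hn1 : (0:ℝ) < n + 1 := by linarith
  -- potential gradient identities
  have hx_id := key_identity Δ t n k b hn hform f hf0
    (fun p => yH p - xH p) (fun p => yA p - xA p)
  have hy_id := key_identity Δ t n k b hn hform g hg0
    (fun p => xH p - yH p) (fun p => xA p - yA p)
  -- aggregate flow difference
  have hgf : ∀ a, (∑ p, Δ a p * (yH p - xH p)) + ∑ p, Δ a p * (yA p - xA p) = g a - f a := by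
    intro a
    rw [hfdef, hgdef]
    simp only [aggFlow]
    rw [← Finset.sum_add_distrib, ← Finset.sum_sub_distrib]
    exact Finset.sum_congr rfl fun p _ => by ring
  by_contra hne
  obtain ⟨a0, ha0⟩ : ∃ a, f a ≠ g a := by
    by_contra h
    push_neg at h
    exact hne (funext h)
  -- per-link convexity estimates
  have hcore : ∀ a, (n + 1) * k a * (f a ^ n - g a ^ n) * (g a - f a) ≤ 0 := by
    intro a
    have h1 := core_le (z := f a) (w := g a) hn (hf0 a) (hg0 a)
    have h2 := core_le (z := g a) (w := f a) hn (hg0 a) (hf0 a)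
    nlinarith [hk a, (hk a).le]
  have hcore0 : (n + 1) * k a0 * (f a0 ^ n - g a0 ^ n) * (g a0 - f a0) < 0 := by
    have h1 := core_lt (z := f a0) (w := g a0) hn (hf0 a0) (hg0 a0) (Ne.symm ha0)
    have h2 := core_le (z := g a0) (w := f a0) hn (hg0 a0) (hf0 a0)
    nlinarith [hk a0, (hk a0).le]
  -- combine
  have hr : ∀ a,
      ((n + 1) * (k a * f a ^ n + b a) * ((∑ p, Δ a p * (yH p - xH p)) + ∑ p, Δ a p * (yA p - xA p))
        - n * b a * ∑ p, Δ a p * (yA p - xA p))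
      + ((n + 1) * (k a * g a ^ n + b a) * ((∑ p, Δ a p * (xH p - yH p)) + ∑ p, Δ a p * (xA p - yA p))
        - n * b a * ∑ p, Δ a p * (xA p - yA p))
      = (n + 1) * k a * (f a ^ n - g a ^ n) * (g a - f a) := by
    intro a
    rw [sum_mul_sub_neg (fun p => Δ a p) xH yH, sum_mul_sub_neg (fun p => Δ a p) xA yA,
      ← hgf a]
    ring
  have hbig : (n + 1) * (∑ p, CH Δ t f p * (yH p - xH p)) + (∑ p, CA Δ t f p * (yA p - xA p))
      + ((n + 1) * (∑ p, CH Δ t g p * (xH p - yH p)) + (∑ p, CA Δ t g p * (xA p - yA p))) < 0 := by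
    rw [← hx_id, ← hy_id, ← Finset.sum_add_distrib]
    have hc : ∑ a, (((n + 1) * (k a * f a ^ n + b a) * ((∑ p, Δ a p * (yH p - xH p)) + ∑ p, Δ a p * (yA p - xA p))
        - n * b a * ∑ p, Δ a p * (yA p - xA p))
      + ((n + 1) * (k a * g a ^ n + b a) * ((∑ p, Δ a p * (xH p - yH p)) + ∑ p, Δ a p * (xA p - yA p))
        - n * b a * ∑ p, Δ a p * (xA p - yA p)))
        = ∑ a, (n + 1) * k a * (f a ^ n - g a ^ n) * (g a - f a) :=
      Finset.sum_congr rfl fun a _ => hr a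
    rw [hc]
    have hlt := Finset.sum_lt_sum (s := Finset.univ)
      (f := fun a => (n + 1) * k a * (f a ^ n - g a ^ n) * (g a - f a))
      (g := fun _ => (0:ℝ))
      (fun a _ => hcore a) ⟨a0, Finset.mem_univ a0, hcore0⟩
    simpa using hlt
  have hc1 : 0 ≤ (n + 1) * (∑ p, CH Δ t f p * (yH p - xH p)) := mul_nonneg hn1.le hSh
  have hc2 : 0 ≤ (n + 1) * (∑ p, CH Δ t g p * (xH p - yH p)) := mul_nonneg hn1.le hSh'
  linarith
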